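/- Let k ∈ ℂ, let y = (y₁,y₂,y₃) ∈ ℝ³ with y₃ ≠ 0, and let M = (m₁,m₂,m₃) ∈ ℝ³ with image current M_R = (m₁,m₂,−m₃) = R M. Define the vector field F(x) = G_k(x,y) M + G_k(x, R y) M_R on ℝ³ \ {y, R y}. Then for every x with x₃ = 0, the first two components of (∇×F)(x) vanish; that is, the tangential part of the curl of F vanishes on the plane x₃ = 0. -/

import Mathlib

noncomputable section

open MeasureTheory

/-- The Euclidean norm on `ℝ³` (realized as `Fin 3 → ℝ`). -/
def enorm3 (x : Fin 3 → ℝ) : ℝ := Real.sqrt (x 0 ^ 2 + x 1 ^ 2 + x 2 ^ 2)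

/-- The Helmholtz Green's function `G_k(x,y) = exp(i k ‖x−y‖)/(4π ‖x−y‖)`. -/
def G (k : ℂ) (x y : Fin 3 → ℝ) : ℂ :=
  Complex.exp (Complex.I * k * (enorm3 (x - y) : ℂ)) /
    (4 * (Real.pi : ℂ) * (enorm3 (x - y) : ℂ))

/-- Reflection across the plane `x₃ = 0`: `R(x₁,x₂,x₃) = (x₁,x₂,−x₃)`. -/
def refl3 (x : Fin 3 → ℝ) : Fin 3 → ℝ := ![x 0, x 1, -x 2]

/-- Partial derivative in the `i`-th coordinate direction. -/
def pd (i : Fin 3) (f : (Fin 3 → ℝ) → ℂ) (x : Fin 3 → ℝ) : ℂ :=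
  fderiv ℝ f x (Pi.single i 1)

/-- The curl `∇×F = (∂₂F₃−∂₃F₂, ∂₃F₁−∂₁F₃, ∂₁F₂−∂₂F₁)` of a vector field. -/
def curl (F : (Fin 3 → ℝ) → Fin 3 → ℂ) (x : Fin 3 → ℝ) : Fin 3 → ℂ :=
  ![pd 1 (fun z => F z 2) x - pd 2 (fun z => F z 1) x,
    pd 2 (fun z => F z 0) x - pd 0 (fun z => F z 2) x,
    pd 0 (fun z => F z 1) x - pd 1 (fun z => F z 0) x]

/-- Reflection as a linear map. -/
def reflLM : (Fin 3 → ℝ) →ₗ[ℝ] (Fin 3 → ℝ) where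
  toFun := refl3
  map_add' a b := by funext i; fin_cases i <;> simp [refl3] <;> ring
  map_smul' c a := by funext i; fin_cases i <;> simp [refl3]

/-- Reflection as a continuous linear map. -/
def reflCLM : (Fin 3 → ℝ) →L[ℝ] (Fin 3 → ℝ) := reflLM.toContinuousLinearMap

lemma reflCLM_apply (x : Fin 3 → ℝ) : reflCLM x = refl3 x := rfl

lemma Geq (k : ℂ) (x y : Fin 3 → ℝ) : G k x (refl3 y) = G k (refl3 x) y := by
  have h : enorm3 (x - refl3 y) = enorm3 (refl3 x - y) := by
    unfold enorm3 refl3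
    simp [Pi.sub_apply]
    ring_nf
  unfold G; rw [h]

lemma enorm3_pos (x y : Fin 3 → ℝ) (h : x 2 ≠ y 2) : 0 < enorm3 (x - y) := by
  unfold enorm3
  apply Real.sqrt_pos.2
  have : (x - y) 2 ≠ 0 := by simpa [sub_eq_zero] using h
  nlinarith [sq_nonneg ((x-y) 0), sq_nonneg ((x-y) 1), sq_pos_of_ne_zero this]

lemma Gdiff (k : ℂ) (y x : Fin 3 → ℝ) (h : x 2 ≠ y 2) :
    DifferentiableAt ℝ (fun z => G k z y) x := by
  have hq : DifferentiableAt ℝ (fun z : Fin 3 → ℝ =>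
      (z - y) 0 ^ 2 + (z - y) 1 ^ 2 + (z - y) 2 ^ 2) x := by
    fun_prop
  have hpos := enorm3_pos x y h
  have hqpos : (0:ℝ) < (x - y) 0 ^ 2 + (x - y) 1 ^ 2 + (x - y) 2 ^ 2 := by
    have : (x - y) 2 ≠ 0 := by simpa [sub_eq_zero] using h
    nlinarith [sq_nonneg ((x-y) 0), sq_nonneg ((x-y) 1), sq_pos_of_ne_zero this]
  have hn : DifferentiableAt ℝ (fun z => enorm3 (z - y)) x := by
    simpa [enorm3] using hq.sqrt (ne_of_gt hqpos)
  have hnC : DifferentiableAt ℝ (fun z => (enorm3 (z - y) : ℂ)) x :=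
    Complex.ofRealCLM.differentiableAt.comp x hn
  unfold G
  simp only [div_eq_mul_inv]
  have hne : (4 * (Real.pi : ℂ) * (enorm3 (x - y) : ℂ)) ≠ 0 := by
    simp [Complex.ofReal_ne_zero.2 (ne_of_gt hpos), Real.pi_ne_zero]
  exact ((hnC.const_mul (Complex.I * k)).cexp).mul ((hnC.const_mul _).inv hne)

lemma pd_comb (i : Fin 3) (f1 f2 : (Fin 3 → ℝ) → ℂ) (c1 c2 : ℂ) (x : Fin 3 → ℝ)
    (h1 : DifferentiableAt ℝ f1 x) (h2 : DifferentiableAt ℝ f2 x) :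
    pd i (fun z => f1 z * c1 + f2 z * c2) x = pd i f1 x * c1 + pd i f2 x * c2 := by
  unfold pd
  rw [fderiv_fun_add (h1.mul_const c1) (h2.mul_const c2), fderiv_mul_const h1, fderiv_mul_const h2]
  simp [mul_comm]

/-- For a magnetic point current `M` at `y` (with `y₃ ≠ 0`) together with its image
current `M_R = RM` at `Ry`, the field `F(x) = G_k(x,y)M + G_k(x,Ry)M_R` has a curl
whose tangential part vanishes on the plane `x₃ = 0`. -/
theorem statement10 (k : ℂ) (y : Fin 3 → ℝ) (hy : y 2 ≠ 0) (M : Fin 3 → ℝ)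
    (x : Fin 3 → ℝ) (hx : x 2 = 0) :
    curl (fun z i => G k z y * (M i : ℂ) + G k z (refl3 y) * (refl3 M i : ℂ)) x 0 = 0 ∧
      curl (fun z i => G k z y * (M i : ℂ) + G k z (refl3 y) * (refl3 M i : ℂ)) x 1 = 0 := by
  set g : (Fin 3 → ℝ) → ℂ := fun z => G k z y with hgdef
  have hxy : x 2 ≠ y 2 := by rw [hx]; exact fun h => hy h.symm
  have hgd : DifferentiableAt ℝ g x := Gdiff k y x hxy
  have hRx : refl3 x = x := by funext i; fin_cases i <;> simp [refl3, hx]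
  have hgRd : DifferentiableAt ℝ (fun z => g (refl3 z)) x := by
    have h1 : DifferentiableAt ℝ g (reflCLM x) := by rw [reflCLM_apply, hRx]; exact hgd
    exact h1.comp x reflCLM.differentiableAt
  have hcomp : fderiv ℝ (fun z => g (refl3 z)) x = (fderiv ℝ g x).comp reflCLM := by
    have h1 : DifferentiableAt ℝ g (reflCLM x) := by rw [reflCLM_apply, hRx]; exact hgd
    have := fderiv_comp x h1 reflCLM.differentiableAt
    rw [reflCLM.fderiv] at this
    rw [show (fun z => g (refl3 z)) = g ∘ reflCLM from rfl, this, reflCLM_apply, hRx]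
  have hGR : ∀ z, G k z (refl3 y) = g (refl3 z) := fun z => Geq k z y
  -- values of the reflected partials
  have hR0 : reflCLM (Pi.single (0 : Fin 3) (1:ℝ)) = Pi.single 0 1 := by
    rw [reflCLM_apply]; funext i; fin_cases i <;> simp [refl3, Pi.single]
  have hR1 : reflCLM (Pi.single (1 : Fin 3) (1:ℝ)) = Pi.single 1 1 := by
    rw [reflCLM_apply]; funext i; fin_cases i <;> simp [refl3, Pi.single]
  have hR2 : reflCLM (Pi.single (2 : Fin 3) (1:ℝ)) = -Pi.single 2 1 := by
    rw [reflCLM_apply]; funext i; fin_cases i <;> simp [refl3, Pi.single]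
  have hp0 : pd 0 (fun z => g (refl3 z)) x = pd 0 g x := by
    unfold pd; rw [hcomp]; simp [hR0]
  have hp1 : pd 1 (fun z => g (refl3 z)) x = pd 1 g x := by
    unfold pd; rw [hcomp]; simp [hR1]
  have hp2 : pd 2 (fun z => g (refl3 z)) x = -pd 2 g x := by
    unfold pd; rw [hcomp]; simp [hR2]
  have hM0 : refl3 M 0 = M 0 := rfl
  have hM1 : refl3 M 1 = M 1 := rfl
  have hM2 : refl3 M 2 = -(M 2) := rfl
  constructor
  · show pd 1 (fun z => g z * (M 2 : ℂ) + G k z (refl3 y) * (refl3 M 2 : ℂ)) x -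
        pd 2 (fun z => g z * (M 1 : ℂ) + G k z (refl3 y) * (refl3 M 1 : ℂ)) x = 0
    simp only [hM1, hM2, hGR]
    rw [pd_comb 1 g _ _ _ x hgd hgRd, pd_comb 2 g _ _ _ x hgd hgRd, hp1, hp2]
    push_cast
    ring
  · show pd 2 (fun z => g z * (M 0 : ℂ) + G k z (refl3 y) * (refl3 M 0 : ℂ)) x -
        pd 0 (fun z => g z * (M 2 : ℂ) + G k z (refl3 y) * (refl3 M 2 : ℂ)) x = 0
    simp only [hM0, hM2, hGR]
    rw [pd_comb 2 g _ _ _ x hgd hgRd, pd_comb 0 g _ _ _ x hgd hgRd, hp2, hp0]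
    push_cast
    ring
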